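/- Fix complete flags F_i^* in K^{d_i} for each vertex i, and let B_d ⊂ G_d = ∏_i GL(d_i) be the Borel subgroup stabilizing all flags. Then the restriction map p : R_{d̂}^{flag}(Q_d) → R_{d̂}(Q̄_d) from flag-type representations of the leg-extended quiver to representations of the legs-only quiver Q̄_d is G_{d̂}-equivariant, its image is a single G_{d̂}-orbit, and the G_{d̂}-stabilizer of the point corresponding to the fixed flags is isomorphic to B_d; consequently B_d-orbits in R_d(Q) correspond bijectively to G_{d̂}-orbits in R_{d̂}^{flag}(Q_d). -/

import Mathlib

open Matrix
variable (K : Type) [Field K]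

/-- Standard inclusion matrix `K^n → K^{n+1}`. -/
def incMat (n : ℕ) : Matrix (Fin (n+1)) (Fin n) K :=
  Matrix.of fun r c => if (r : ℕ) = (c : ℕ) then 1 else 0

lemma mul_incMat {m n : ℕ} (A : Matrix (Fin m) (Fin (n+1)) K) (r : Fin m) (c : Fin n) :
    (A * incMat K n) r c = A r c.castSucc := by
  rw [Matrix.mul_apply]
  rw [Finset.sum_eq_single c.castSucc]
  · simp [incMat]
  · intro j _ hj
    have : ¬ ((j : ℕ) = (c : ℕ)) := by
      intro h; exact hj (Fin.ext (by simpa using h))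
    simp [incMat, this]
  · simp

lemma incMat_mul {m n : ℕ} (B : Matrix (Fin n) (Fin m) K) (r : Fin (n+1)) (c : Fin m) :
    (incMat K n * B) r c = if h : (r : ℕ) < n then B ⟨r, h⟩ c else 0 := by
  rw [Matrix.mul_apply]
  by_cases h : (r : ℕ) < n
  · rw [dif_pos h, Finset.sum_eq_single (⟨(r : ℕ), h⟩ : Fin n)]
    · simp [incMat]
    · intro j _ hj
      have : ¬ ((r : ℕ) = (j : ℕ)) := by
        intro hh; exact hj (Fin.ext (by simpa using hh.symm))
      simp [incMat, this]
    · simp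
  · rw [dif_neg h]
    apply Finset.sum_eq_zero
    intro j _
    have : ¬ ((r : ℕ) = (j : ℕ)) := by
      intro hh; exact h (hh ▸ j.isLt)
    simp [incMat, this]

lemma isUnit_mulVec_injective {n : ℕ} {N : Matrix (Fin n) (Fin n) K} (h : IsUnit N) :
    Function.Injective N.mulVec :=
  Matrix.mulVec_injective_iff_isUnit.2 h

/-- Any injective `(n+1) × n` matrix extends by one column to an invertible one. -/
lemma exists_extension {n : ℕ} (M : Matrix (Fin (n+1)) (Fin n) K)
    (hM : Function.Injective M.mulVec) :
    ∃ N : Matrix (Fin (n+1)) (Fin (n+1)) K, IsUnit N ∧ ∀ r c, N r (Fin.castSucc c) = M r c := by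
  have hli : LinearIndependent K (fun c => M.transpose c) := Matrix.mulVec_injective_iff.1 hM
  -- find a vector not in the span of the columns
  have hne : Submodule.span K (Set.range Mᵀ) ≠ ⊤ := by
    intro htop
    have h1 : Module.finrank K (Submodule.span K (Set.range Mᵀ)) ≤ n := by
      simpa [Set.finrank] using finrank_range_le_card (R := K) Mᵀ
    rw [htop] at h1
    simp [finrank_top] at h1
  obtain ⟨v, hv⟩ : ∃ v, v ∉ Submodule.span K (Set.range Mᵀ) := by
    by_contra hc
    push_neg at hc
    exact hne (Submodule.eq_top_iff'.2 hc)
  set N : Matrix (Fin (n+1)) (Fin (n+1)) K := (Matrix.of (Fin.snoc Mᵀ v))ᵀ with hN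
  refine ⟨N, ?_, ?_⟩
  · rw [← Matrix.mulVec_injective_iff_isUnit, Matrix.mulVec_injective_iff]
    have : LinearIndependent K (Fin.snoc Mᵀ v : Fin (n+1) → (Fin (n+1) → K)) :=
      linearIndependent_fin_snoc.2 ⟨hli, hv⟩
    simpa [hN] using this
  · intro r c
    simp [hN, Matrix.transpose_apply, Fin.snoc_castSucc]
    simp [Fin.snoc]

open Classical in
/-- Totalized extension. -/
noncomputable def extendMat {n : ℕ} (M : Matrix (Fin (n+1)) (Fin n) K) :
    Matrix (Fin (n+1)) (Fin (n+1)) K :=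
  if h : Function.Injective M.mulVec then (exists_extension K M h).choose else 1

lemma extendMat_isUnit {n : ℕ} {M : Matrix (Fin (n+1)) (Fin n) K}
    (h : Function.Injective M.mulVec) : IsUnit (extendMat K M) := by
  classical rw [extendMat, dif_pos h]; exact (exists_extension K M h).choose_spec.1

lemma extendMat_spec {n : ℕ} {M : Matrix (Fin (n+1)) (Fin n) K}
    (h : Function.Injective M.mulVec) (r : Fin (n+1)) (c : Fin n) :
    extendMat K M r (Fin.castSucc c) = M r c := by
  classical rw [extendMat, dif_pos h]; exact (exists_extension K M h).choose_spec.2 r c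

section Chain

variable {D : ℕ} (m : ∀ k : ℕ, k + 1 < D → Matrix (Fin (k+2)) (Fin (k+1)) K)

/-- Inductive construction of base changes along one leg. -/
noncomputable def chain : (k : ℕ) → Matrix (Fin (k+1)) (Fin (k+1)) K
  | 0 => 1
  | k+1 => if h : k + 1 < D then extendMat K (m k h * chain k) else 1

variable {m}

lemma chain_isUnit (hm : ∀ k h, Function.Injective (m k h).mulVec) :
    ∀ k : ℕ, IsUnit (chain K m k) := by
  intro k
  induction k with
  | zero => exact isUnit_one
  | succ k ih =>
    rw [chain]
    split
    · next h =>
      apply extendMat_isUnit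
      intro v w hvw
      have h2 : Function.Injective (Matrix.mulVec (m k h) ∘ Matrix.mulVec (chain K m k)) :=
        (hm k h).comp (isUnit_mulVec_injective K ih)
      apply h2
      simpa [Function.comp, Matrix.mulVec_mulVec] using hvw
    · exact isUnit_one

lemma chain_spec (hm : ∀ k h, Function.Injective (m k h).mulVec)
    (k : ℕ) (h : k + 1 < D) (r : Fin (k+2)) (c : Fin (k+1)) :
    chain K m (k+1) r (Fin.castSucc c) = (m k h * chain K m k) r c := by
  rw [chain, dif_pos h]
  apply extendMat_spec
  intro v w hvw
  have h2 : Function.Injective (Matrix.mulVec (m k h) ∘ Matrix.mulVec (chain K m k)) :=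
    (hm k h).comp (isUnit_mulVec_injective K (chain_isUnit K hm k))
  apply h2
  simpa [Function.comp, Matrix.mulVec_mulVec] using hvw

end Chain

section Tri

/-- Upper triangular predicate matching the statement's formulation. -/
def UpperTri {n : ℕ} (M : Matrix (Fin n) (Fin n) K) : Prop :=
  ∀ r c : Fin n, (c : ℕ) < (r : ℕ) → M r c = 0

lemma UpperTri.blockTriangular {n : ℕ} {M : Matrix (Fin n) (Fin n) K} (h : UpperTri K M) :
    M.BlockTriangular id := by
  intro r c hrc
  exact h r c hrc

lemma UpperTri.det {n : ℕ} {M : Matrix (Fin n) (Fin n) K} (h : UpperTri K M) :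
    M.det = ∏ i, M i i :=
  Matrix.det_of_upperTriangular (UpperTri.blockTriangular K h)

lemma UpperTri.diag_ne_zero {n : ℕ} {M : Matrix (Fin n) (Fin n) K} (h : UpperTri K M)
    (hu : IsUnit M) (i : Fin n) : M i i ≠ 0 := by
  have hd : M.det ≠ 0 := by
    have := (Matrix.isUnit_iff_isUnit_det M).1 hu
    exact this.ne_zero
  rw [UpperTri.det K h] at hd
  exact Finset.prod_ne_zero_iff.1 hd i (Finset.mem_univ i)

/-- Principal blocks of invertible upper triangular matrices are invertible (and triangular). -/
lemma principal_block_isUnit {n : ℕ} {M : Matrix (Fin n) (Fin n) K} (h : UpperTri K M)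
    (hu : IsUnit M) {m : ℕ} (hm : m ≤ n) :
    IsUnit (M.submatrix (Fin.castLE hm) (Fin.castLE hm)) ∧
      UpperTri K (M.submatrix (Fin.castLE hm) (Fin.castLE hm)) := by
  have htri : UpperTri K (M.submatrix (Fin.castLE hm) (Fin.castLE hm)) := by
    intro r c hrc
    exact h _ _ (by simpa using hrc)
  refine ⟨?_, htri⟩
  rw [Matrix.isUnit_iff_isUnit_det, isUnit_iff_ne_zero, UpperTri.det K htri]
  rw [Finset.prod_ne_zero_iff]
  intro i _
  exact UpperTri.diag_ne_zero K h hu _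

end Tri



section Flags

variable {V A : Type} [Fintype V] [Fintype A] [DecidableEq V]
variable (K : Type) [Field K] (s t : A → V) (d : V → ℕ)

/-- Vertices `(i,k)` of the leg-extended quiver `Q_d`; `k : Fin (d i)` encodes the
paper's vertex `(i,k+1)`. -/
abbrev LegV : Type := Σ i : V, Fin (d i)

/-- The canonical dimension vector `d̂` of `Q_d`: `d̂_{(i,k)} = k`. -/
abbrev dhat : LegV d → ℕ := fun w => (w.2 : ℕ) + 1

/-- Leg arrows `β_{(i,k)} : (i,k) → (i,k+1)`. -/
abbrev LegA : Type := Σ i : V, {k : Fin (d i) // (k : ℕ) + 1 < d i}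

def legSrc : LegA d → LegV d := fun l => ⟨l.1, l.2.1⟩
def legTgt : LegA d → LegV d := fun l => ⟨l.1, ⟨(l.2.1 : ℕ) + 1, l.2.2⟩⟩

/-- The base change group `G_{d̂}` of the leg-extended quiver. -/
abbrev Gd : Type := ∀ w : LegV d, (Matrix (Fin (dhat d w)) (Fin (dhat d w)) K)ˣ

/-- Representations of the legs-only quiver `Q̄_d` of dimension vector `d̂`. -/
abbrev BarRep : Type :=
  ∀ l : LegA d, Matrix (Fin (dhat d (legTgt d l))) (Fin (dhat d (legSrc d l))) K

/-- Representations of `Q` of dimension vector `d` (the fibre `R_d(Q)`). -/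
abbrev QRep : Type := ∀ a : A, Matrix (Fin (d (t a))) (Fin (d (s a))) K

/-- The base point of `R_{d̂}(Q̄_d)`: each leg arrow is the standard inclusion
`K^k → K^{k+1}` corresponding to the fixed complete flags. -/
def x0 : BarRep K d := fun _ r c => if (r : ℕ) = (c : ℕ) then 1 else 0

/-- The action of `G_{d̂}` on representations of the legs-only quiver. -/
def actBar (g : Gd K d) (y : BarRep K d) : BarRep K d :=
  fun l => ((g (legTgt d l)).1 * y l) * ((g (legSrc d l))⁻¹).1

/-- The top vertex `(i, d_i)` of the `i`-th leg. -/
def topV (hd : ∀ i, 0 < d i) (i : V) : LegV d :=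
  ⟨i, ⟨d i - 1, by have := hd i; omega⟩⟩

/-- The component of `g ∈ G_{d̂}` at the top vertex of the `i`-th leg, viewed as a
`d_i × d_i` matrix. -/
def topMat (hd : ∀ i, 0 < d i) (g : Gd K d) (i : V) :
    Matrix (Fin (d i)) (Fin (d i)) K :=
  Matrix.reindex
    (finCongr (by have := hd i; simp only [dhat, topV]; omega : dhat d (topV d hd i) = d i))
    (finCongr (by have := hd i; simp only [dhat, topV]; omega : dhat d (topV d hd i) = d i))
    (g (topV d hd i)).1

/-- The action of `G_{d̂}` on representations of the full leg-extended quiver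
`Q_d` of dimension vector `d̂` (identified with pairs: the legs part and the
`R_d(Q)` part attached at the tops of the legs). -/
def actFull (hd : ∀ i, 0 < d i) (g : Gd K d) (z : BarRep K d × QRep K s t d) :
    BarRep K d × QRep K s t d :=
  (actBar K d g z.1,
   fun a => (topMat K d hd g (t a) * z.2 a) * topMat K d hd (fun w => (g w)⁻¹) (s a))

/-- A representation of `Q_d` of dimension vector `d̂` is of flag type if all leg
arrows act by injective maps. -/
def FlagType (z : BarRep K d × QRep K s t d) : Prop :=
  ∀ l : LegA d, Function.Injective ((z.1 l).mulVec)


-- ## Auxiliary lemmas for the main theorem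

/-- Cancellation against a unit for rectangular matrices. -/
lemma mul_unitInv_eq_iff {m n : ℕ} (u : (Matrix (Fin n) (Fin n) K)ˣ)
    (a b : Matrix (Fin m) (Fin n) K) :
    a * ((u⁻¹ : _ˣ) : Matrix (Fin n) (Fin n) K) = b ↔ a = b * (u : Matrix (Fin n) (Fin n) K) := by
  constructor
  · rintro rfl
    rw [Matrix.mul_assoc, Units.inv_mul, Matrix.mul_one]
  · rintro rfl
    rw [Matrix.mul_assoc, Units.mul_inv, Matrix.mul_one]

variable {K s t d}

/-- The stabilizer equation, leg by leg, in `incMat` form. -/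
lemma stab_leg {g : Gd K d} (hg : actBar K d g (x0 K d) = x0 K d)
    {i : V} {k : ℕ} (hk : k + 1 < d i) (hk' : k < d i) :
    (g ⟨i, ⟨k+1, hk⟩⟩).1 * incMat K (k+1) = incMat K (k+1) * (g ⟨i, ⟨k, hk'⟩⟩).1 := by
  have E0 : ((g ⟨i, ⟨k+1, hk⟩⟩).1 * incMat K (k+1)) * ((g ⟨i, ⟨k, hk'⟩⟩)⁻¹).1
      = incMat K (k+1) := congrFun hg ⟨i, ⟨⟨k, hk'⟩, hk⟩⟩
  exact (mul_unitInv_eq_iff K _ _ _).1 E0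

lemma stab_of_leg {g : Gd K d}
    (h : ∀ (i : V) (k : ℕ) (hk : k + 1 < d i) (hk' : k < d i),
      (g ⟨i, ⟨k+1, hk⟩⟩).1 * incMat K (k+1) = incMat K (k+1) * (g ⟨i, ⟨k, hk'⟩⟩).1) :
    actBar K d g (x0 K d) = x0 K d := by
  funext l
  obtain ⟨i, ⟨⟨k, hk'⟩, hk⟩⟩ := l
  have E0 : ((g ⟨i, ⟨k+1, hk⟩⟩).1 * incMat K (k+1)) * ((g ⟨i, ⟨k, hk'⟩⟩)⁻¹).1
      = incMat K (k+1) := (mul_unitInv_eq_iff K _ _ _).2 (h i k hk hk')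
  exact E0

/-- Transitivity on the flag-type locus. -/
lemma orbit_x0 (y : BarRep K d) (hy : ∀ l, Function.Injective ((y l).mulVec)) :
    ∃ g : Gd K d, actBar K d g (x0 K d) = y := by
  classical
  let m : ∀ i : V, ∀ k : ℕ, k + 1 < d i → Matrix (Fin (k+2)) (Fin (k+1)) K :=
    fun i k h => y ⟨i, ⟨⟨k, Nat.lt_of_succ_lt h⟩, h⟩⟩
  have hm : ∀ i, ∀ k h, Function.Injective ((m i k h).mulVec) := fun i k h => hy _
  refine ⟨fun w => (chain_isUnit K (hm w.1) (w.2 : ℕ)).unit, ?_⟩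
  funext l
  obtain ⟨i, ⟨⟨k, hk'⟩, hk⟩⟩ := l
  have yl : Matrix (Fin (k+2)) (Fin (k+1)) K := y ⟨i, ⟨⟨k, hk'⟩, hk⟩⟩
  have key : chain K (m i) (k+1) * incMat K (k+1)
      = m i k hk * chain K (m i) k := by
    ext r c
    rw [mul_incMat, chain_spec K (hm i) k hk r c]
  have E0 : ((chain_isUnit K (hm i) (k+1)).unit.1 * incMat K (k+1))
      * ((chain_isUnit K (hm i) k).unit⁻¹).1 = m i k hk := by
    rw [mul_unitInv_eq_iff, IsUnit.unit_spec, IsUnit.unit_spec, key]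
  exact E0

section WithHd

variable (hd : ∀ i, 0 < d i)

lemma topMat_mul (g h : Gd K d) (i : V) :
    topMat K d hd (fun w => g w * h w) i = topMat K d hd g i * topMat K d hd h i := by
  simp only [topMat, Matrix.reindex_apply, Units.val_mul]
  exact (Matrix.submatrix_mul_equiv _ _ _ _ _).symm

lemma topMat_one (i : V) : topMat K d hd (fun _ => 1) i = 1 := by
  simp [topMat]

/-- The top component as a unit. -/
def topUnit (g : Gd K d) (i : V) : (Matrix (Fin (d i)) (Fin (d i)) K)ˣ where
  val := topMat K d hd g i
  inv := topMat K d hd (fun w => (g w)⁻¹) i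
  val_inv := by
    rw [← topMat_mul hd g (fun w => (g w)⁻¹) i,
      show (fun w => g w * (g w)⁻¹) = (fun _ : LegV d => (1 : (Matrix _ _ K)ˣ)) from
        funext fun w => mul_inv_cancel (g w), topMat_one]
  inv_val := by
    rw [← topMat_mul hd (fun w => (g w)⁻¹) g i,
      show (fun w => (g w)⁻¹ * g w) = (fun _ : LegV d => (1 : (Matrix _ _ K)ˣ)) from
        funext fun w => inv_mul_cancel (g w), topMat_one]

lemma stab_tri {g : Gd K d} (hg : actBar K d g (x0 K d) = x0 K d) (i : V) :
    ∀ (k : ℕ) (hk : k < d i), UpperTri K (g ⟨i, ⟨k, hk⟩⟩).1 := by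
  intro k
  induction k with
  | zero =>
    intro hk r c hrc
    have hr2 : (r : ℕ) < 1 := r.isLt
    exact absurd hrc (by omega)
  | succ k ih =>
    intro hk r c hrc
    have hk' : k < d i := Nat.lt_of_succ_lt hk
    have E := stab_leg hg hk hk'
    by_cases hc : (c : ℕ) < k + 1
    · have H : ∀ r' c', ((g ⟨i, ⟨k+1, hk⟩⟩).1 * incMat K (k+1)) r' c'
          = (incMat K (k+1) * (g ⟨i, ⟨k, hk'⟩⟩).1) r' c' := fun r' c' => by rw [E]
      have H2 := H r ⟨(c : ℕ), hc⟩
      rw [mul_incMat, incMat_mul] at H2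
      have hcc : c = Fin.castSucc ⟨(c : ℕ), hc⟩ := Fin.ext rfl
      rw [hcc, H2]
      by_cases hr : (r : ℕ) < k + 1
      · rw [dif_pos hr]
        exact ih hk' ⟨(r : ℕ), hr⟩ ⟨(c : ℕ), hc⟩ hrc
      · rw [dif_neg hr]
    · have hc2 : (c : ℕ) < k + 2 := c.isLt
      have hr2 : (r : ℕ) < k + 2 := r.isLt
      exact absurd hrc (by omega)

lemma stab_det {g : Gd K d} (hg : actBar K d g (x0 K d) = x0 K d)
    {i : V} {k : ℕ} (hk : k + 1 < d i) (hk' : k < d i) (r c : Fin (k+1)) :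
    (g ⟨i, ⟨k, hk'⟩⟩).1 r c = (g ⟨i, ⟨k+1, hk⟩⟩).1 r.castSucc c.castSucc := by
  have E := stab_leg hg hk hk'
  have H : ((g ⟨i, ⟨k+1, hk⟩⟩).1 * incMat K (k+1)) r.castSucc c
      = (incMat K (k+1) * (g ⟨i, ⟨k, hk'⟩⟩).1) r.castSucc c := by rw [E]
  rw [mul_incMat, incMat_mul, dif_pos (show ((r.castSucc : Fin (k+2)) : ℕ) < k + 1 from r.2)]
    at H
  have hr : (⟨((r.castSucc : Fin (k+2)) : ℕ), r.2⟩ : Fin (k+1)) = r := Fin.ext rfl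
  rw [hr] at H
  exact H.symm

lemma stab_topTri {g : Gd K d} (hg : actBar K d g (x0 K d) = x0 K d) (i : V) :
    UpperTri K (topMat K d hd g i) := by
  intro r c hrc
  simp only [topMat, Matrix.reindex_apply, Matrix.submatrix_apply]
  exact stab_tri hg i (d i - 1) (by have := hd i; omega) _ _ hrc

lemma stab_injOn {g g' : Gd K d} (hg : actBar K d g (x0 K d) = x0 K d)
    (hg' : actBar K d g' (x0 K d) = x0 K d)
    (htop : (fun i => topMat K d hd g i) = fun i => topMat K d hd g' i) : g = g' := by
  funext w
  obtain ⟨i, kf⟩ := w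
  have main : ∀ j k (hk : k < d i), k + j = d i - 1 →
      g ⟨i, ⟨k, hk⟩⟩ = g' ⟨i, ⟨k, hk⟩⟩ := by
    intro j
    induction j with
    | zero =>
      intro k hk hsum
      have hkk : k = d i - 1 := by omega
      subst hkk
      have h1 := congrFun htop i
      simp only [topMat] at h1
      have h2 := (Matrix.reindex (finCongr (by have := hd i; simp only [dhat, topV]; omega))
        (finCongr (by have := hd i; simp only [dhat, topV]; omega))).injective h1
      exact Units.ext h2
    | succ j ihj =>
      intro k hk hsum
      have hk1 : k + 1 < d i := by omega
      have hstep := ihj (k+1) hk1 (by omega)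
      apply Units.ext
      ext r c
      rw [stab_det hg hk1 hk, stab_det hg' hk1 hk, hstep]
  have hk := kf.isLt
  exact main (d i - 1 - kf.1) kf.1 hk (by omega)

lemma stab_surj {b : ∀ i, Matrix (Fin (d i)) (Fin (d i)) K}
    (hb : ∀ i, IsUnit (b i)) (htri : ∀ i, UpperTri K (b i)) :
    ∃ g : Gd K d, actBar K d g (x0 K d) = x0 K d ∧ (fun i => topMat K d hd g i) = b := by
  have hblock := fun (w : LegV d) =>
    principal_block_isUnit K (htri w.1) (hb w.1) (show (w.2 : ℕ) + 1 ≤ d w.1 from w.2.isLt)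
  refine ⟨fun w => (hblock w).1.unit, ?_, ?_⟩
  · apply stab_of_leg
    intro i k hk hk'
    rw [IsUnit.unit_spec, IsUnit.unit_spec]
    ext r c
    rw [mul_incMat, incMat_mul]
    by_cases h : (r : ℕ) < k + 1
    · rw [dif_pos h]
      simp only [Matrix.submatrix_apply]
      congr 1 <;> exact Fin.ext rfl
    · rw [dif_neg h]
      apply htri i
      simp only [Fin.coe_castLE, Fin.coe_castSucc]
      have := r.2
      have := c.2
      omega
  · funext i
    ext r c
    simp only [topMat, Matrix.reindex_apply, Matrix.submatrix_apply, IsUnit.unit_spec]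
    congr 1 <;> exact Fin.ext rfl

end WithHd

variable (K s t d) in
/-- Lemma 3.1: fixing the complete flags (standard flags) in `K^{d_i}` with Borel
stabilizer `B_d` (invertible upper triangular matrices), the restriction map
`p : R_{d̂}^{flag}(Q_d) → R_{d̂}(Q̄_d)`, `z ↦ z.1`, is `G_{d̂}`-equivariant, its
image (the flag-type points of `R_{d̂}(Q̄_d)`) is the single `G_{d̂}`-orbit of the
base point `x₀` given by the standard inclusions, the stabilizer of `x₀` maps
isomorphically (via the top components, multiplicatively and bijectively) onto
`B_d`, and consequently `B_d`-orbits in `R_d(Q)` correspond bijectively to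
`G_{d̂}`-orbits in `R_{d̂}^{flag}(Q_d)`. -/
theorem flag_bundle_correspondence (hd : ∀ i, 0 < d i) :
    -- `p` is `G_{d̂}`-equivariant
    (∀ (g : Gd K d) (z : BarRep K d × QRep K s t d),
        (actFull K s t d hd g z).1 = actBar K d g z.1) ∧
    -- the flag-type locus of `R_{d̂}(Q̄_d)` is the single orbit of `x₀`
    (∀ y : BarRep K d, (∀ l, Function.Injective ((y l).mulVec)) →
        ∃ g : Gd K d, actBar K d g (x0 K d) = y) ∧
    -- the top-component map is multiplicative ...
    (∀ g h : Gd K d,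
        (fun i => topMat K d hd (fun w => g w * h w) i) =
          fun i => topMat K d hd g i * topMat K d hd h i) ∧
    -- ... and restricts to a bijection from the stabilizer of `x₀` onto `B_d`
    Set.BijOn (fun g : Gd K d => fun i => topMat K d hd g i)
      {g : Gd K d | actBar K d g (x0 K d) = x0 K d}
      {b : ∀ i : V, Matrix (Fin (d i)) (Fin (d i)) K |
        (∀ i, IsUnit (b i)) ∧
        ∀ i (r c : Fin (d i)), (c : ℕ) < (r : ℕ) → b i r c = 0} ∧
    -- consequently: `B_d`-orbits in `R_d(Q)` correspond to `G_{d̂}`-orbits of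
    -- flag-type points: the orbit equivalences match up ...
    (∀ x y : QRep K s t d,
        (∃ b : ∀ i : V, (Matrix (Fin (d i)) (Fin (d i)) K)ˣ,
            (∀ i (r c : Fin (d i)), (c : ℕ) < (r : ℕ) → (b i).1 r c = 0) ∧
            ∀ a, ((b (t a)).1 * x a) * ((b (s a))⁻¹).1 = y a) ↔
          ∃ g : Gd K d, actFull K s t d hd g (x0 K d, x) = (x0 K d, y)) ∧
    -- ... and every flag-type point of `R_{d̂}(Q_d)` is in the orbit of one
    -- coming from `R_d(Q)`
    (∀ z : BarRep K d × QRep K s t d, FlagType K s t d z →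
        ∃ (g : Gd K d) (x : QRep K s t d),
          actFull K s t d hd g (x0 K d, x) = z) := by
  refine ⟨fun g z => rfl, orbit_x0, fun g h => funext fun i => topMat_mul hd g h i,
    ⟨?_, ?_, ?_⟩, fun x y => ⟨?_, ?_⟩, ?_⟩
  · -- MapsTo
    intro g hg
    exact ⟨fun i => (topUnit hd g i).isUnit, fun i r c h => stab_topTri hd hg i r c h⟩
  · -- InjOn
    intro g hg g' hg' h
    exact stab_injOn hd hg hg' h
  · -- SurjOn
    intro b hb
    obtain ⟨g, h1, h2⟩ := stab_surj hd hb.1 (fun i r c h => hb.2 i r c h)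
    exact ⟨g, h1, h2⟩
  · -- orbit correspondence, forward
    rintro ⟨b, hbtri, hbeq⟩
    obtain ⟨g, hg1, hg2⟩ :=
      stab_surj hd (b := fun i => (b i).1) (fun i => (b i).isUnit)
        (fun i r c h => hbtri i r c h)
    have hbu : ∀ i, topUnit hd g i = b i := fun i => Units.ext (congrFun hg2 i)
    refine ⟨g, ?_⟩
    have hfst : (actFull K s t d hd g (x0 K d, x)).1 = x0 K d := hg1
    have hsnd : (actFull K s t d hd g (x0 K d, x)).2 = y := by
      funext a
      have e1 : topMat K d hd g (t a) = (b (t a)).1 := congrFun hg2 (t a)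
      have e2 : topMat K d hd (fun w => (g w)⁻¹) (s a) = ((b (s a))⁻¹).1 := by
        rw [← hbu (s a)]; rfl
      show (topMat K d hd g (t a) * x a) * topMat K d hd (fun w => (g w)⁻¹) (s a) = y a
      rw [e1, e2]
      exact hbeq a
    exact Prod.ext hfst hsnd
  · -- orbit correspondence, backward
    rintro ⟨g, hg⟩
    have h1 : actBar K d g (x0 K d) = x0 K d := congrArg Prod.fst hg
    refine ⟨fun i => topUnit hd g i, fun i r c h => stab_topTri hd h1 i r c h, fun a => ?_⟩
    exact congrFun (congrArg Prod.snd hg) a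
  · -- flag-type points come from R_d(Q)
    intro z hz
    obtain ⟨g, hg⟩ := orbit_x0 z.1 hz
    refine ⟨g, fun a =>
      (topMat K d hd (fun w => (g w)⁻¹) (t a) * z.2 a) * topMat K d hd g (s a), ?_⟩
    have hsnd : ∀ a, (topMat K d hd g (t a) *
        ((topMat K d hd (fun w => (g w)⁻¹) (t a) * z.2 a) * topMat K d hd g (s a))) *
          topMat K d hd (fun w => (g w)⁻¹) (s a) = z.2 a := by
      intro a
      have e1 : topMat K d hd g (t a) * topMat K d hd (fun w => (g w)⁻¹) (t a) = 1 :=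
        (topUnit hd g (t a)).val_inv
      have e2 : topMat K d hd g (s a) * topMat K d hd (fun w => (g w)⁻¹) (s a) = 1 :=
        (topUnit hd g (s a)).val_inv
      simp only [Matrix.mul_assoc]
      rw [e2, Matrix.mul_one, ← Matrix.mul_assoc, e1, Matrix.one_mul]
    exact Prod.ext hg (funext hsnd)


end Flags
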